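/- Suppose R is a full Suslin tree, D ⊆ ω₁ is a club, and s ≠ t are elements of R of the same height. Then there is no order-preserving injection from R_s↾D to R_t↾D. -/

import Mathlib

noncomputable section

open Set

/-- The first uncountable ordinal `ω₁`. -/
def omega_1 : Ordinal := (Cardinal.aleph 1).ord

/-- A tree structure on a partial order `T`: a height function witnessing that the set of
predecessors of each node is well-ordered, with `ht t` its order type.  The fields say that
the predecessors of a node form a chain, that heights are strictly increasing, and that a
node of height `α` has (necessarily unique) predecessors of every height `ξ < α`. -/
structure TreeHt.{u_1, u_2} (T : Type u_1) [PartialOrder T] where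
  ht : T → Ordinal.{u_2}
  chain_below : ∀ t : T, IsChain (· ≤ ·) {s : T | s < t}
  ht_lt : ∀ {s t : T}, s < t → ht s < ht t
  exists_below : ∀ t : T, ∀ ξ < ht t, ∃ s, s < t ∧ ht s = ξ

variable {T S : Type*} [PartialOrder T] [PartialOrder S]

/-- The `α`-th level of a tree. -/
def TreeHt.level (tr : TreeHt T) (α : Ordinal) : Set T := {t | tr.ht t = α}

/-- An `ℵ₁`-tree: height `ω₁` (all heights are countable and all countable levels are
nonempty) and all levels countable. -/
def IsAleph1Tree (tr : TreeHt T) : Prop :=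
  (∀ t : T, tr.ht t < omega_1) ∧
  (∀ α < omega_1, (tr.level α).Nonempty) ∧
  (∀ α : Ordinal, (tr.level α).Countable)

/-- An Aronszajn tree: an `ℵ₁`-tree with no uncountable chain. -/
def IsAronszajn (tr : TreeHt T) : Prop :=
  IsAleph1Tree tr ∧ ∀ c : Set T, IsChain (· ≤ ·) c → c.Countable

/-- A Suslin tree: an Aronszajn tree with no uncountable antichain. -/
def IsSuslin (tr : TreeHt T) : Prop :=
  IsAronszajn tr ∧
  ∀ a : Set T, (∀ x ∈ a, ∀ y ∈ a, x ≠ y → ¬ (x ≤ y) ∧ ¬ (y ≤ x)) → a.Countable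

/-- The carrier of the derived tree `R_{a 0} ⊗ … ⊗ R_{a n}`: tuples lying above the `a i`
with all coordinates of equal height, ordered coordinatewise. -/
def derivedTreeSet (tr : TreeHt T) {n : ℕ} (a : Fin (n + 1) → T) :
    Set (Fin (n + 1) → T) :=
  {f | (∀ i, a i ≤ f i) ∧ ∃ ε, ∀ i, tr.ht (f i) = ε}

/-- A full Suslin tree: a Suslin tree all of whose derived trees (with their canonical
height function) are Suslin. -/
def IsFullSuslin (tr : TreeHt T) : Prop :=
  IsSuslin tr ∧
  ∀ (n : ℕ) (δ : Ordinal), δ < omega_1 →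
    ∀ a : Fin (n + 1) → T, Function.Injective a → (∀ i, tr.ht (a i) = δ) →
      ∃ dtr : TreeHt ↥(derivedTreeSet tr a),
        (∀ f : ↥(derivedTreeSet tr a), dtr.ht f = tr.ht (f.1 0) - δ) ∧ IsSuslin dtr

/-- A club (closed unbounded) subset of `ω₁`. -/
def IsClubSet (C : Set Ordinal) : Prop :=
  (∀ α ∈ C, α < omega_1) ∧
  (∀ α < omega_1, ∃ β ∈ C, α ≤ β) ∧
  (∀ α < omega_1, α ≠ 0 → (∀ β < α, ∃ γ ∈ C, β < γ ∧ γ < α) → α ∈ C)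

/-- `f` is an order preserving injection of `T↾C` into `S` (only the values of `f` on
`T↾C = {t | ht t ∈ C}` are constrained). -/
def ClubEmbedding (trT : TreeHt T) (trS : TreeHt S) (C : Set Ordinal) (f : T → S) : Prop :=
  (∀ t₁ t₂ : T, trT.ht t₁ ∈ C → trT.ht t₂ ∈ C → t₁ < t₂ → f t₁ < f t₂) ∧
  (∀ t₁ t₂ : T, trT.ht t₁ ∈ C → trT.ht t₂ ∈ C → f t₁ = f t₂ → t₁ = t₂)

/-- `T` club-embeds into `S`. -/
def ClubEmbeds (trT : TreeHt T) (trS : TreeHt S) : Prop :=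
  ∃ C : Set Ordinal, IsClubSet C ∧ ∃ f : T → S, ClubEmbedding trT trS C f

/-- A (downward closed, pruned) subtree of an `ℵ₁`-tree. -/
def IsSubtree (tr : TreeHt T) (S' : Set T) : Prop :=
  (∀ s ∈ S', ∀ t, t ≤ s → t ∈ S') ∧
  (∀ s ∈ S', ∀ β, tr.ht s ≤ β → β < omega_1 → ∃ t ∈ S', s ≤ t ∧ tr.ht t = β)

/-- A club-minimal tree: it club-embeds into each of its subtrees. -/
def ClubMinimal (tr : TreeHt T) : Prop :=
  ∀ S' : Set T, IsSubtree tr S' →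
    ∃ C : Set Ordinal, IsClubSet C ∧ ∃ f : T → T,
      (∀ t, tr.ht t ∈ C → f t ∈ S') ∧ ClubEmbedding tr tr C f

/-- A ladder system on `ω₁`: for each countable limit `α`, `η α` is a cofinal subset of `α`
of order type `ω`. -/
def IsLadderSystem (η : Ordinal → Set Ordinal) : Prop :=
  ∀ α, α < omega_1 → Order.IsSuccLimit α →
    (∀ ξ ∈ η α, ξ < α) ∧ (∀ β < α, ∃ ξ ∈ η α, β < ξ) ∧
    (∀ β < α, {ξ ∈ η α | ξ ≤ β}.Finite)

/-- `f : S' → 2` is an `A`-uniformization of the constant 2-colouring of `η` coded by `c`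
(the colour on the ladder `η α` being constantly `c α`): `S'` is a subtree and for every
node `t` of `S'` of limit height `α`, `f (t↾ξ) = c α` for all but finitely many `ξ ∈ η α`. -/
def IsUniformization (tr : TreeHt T) (η : Ordinal → Set Ordinal)
    (c : Ordinal → Fin 2) (S' : Set T) (f : T → Fin 2) : Prop :=
  IsSubtree tr S' ∧
  ∀ α, α < omega_1 → Order.IsSuccLimit α → ∀ t ∈ S', tr.ht t = α →
    {ξ ∈ η α | ∃ s, s < t ∧ tr.ht s = ξ ∧ f s ≠ c α}.Finite

/-- The linear order `ω₁` (the set of countable ordinals). -/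
abbrev Omega1Type : Type 1 := {o : Ordinal // o < omega_1}

/-- A minimal uncountable linear order: uncountable, and order-embeds into each of its
uncountable suborders. -/
def MinimalUncountableLinearOrder (L : Type*) [LinearOrder L] : Prop :=
  ¬ Countable L ∧ ∀ S' : Set L, ¬ S'.Countable → Nonempty (L ↪o ↥S')

-- auxiliary lemmas, to be inserted before `statement2`
namespace SAux

universe u

theorem omega1_isLimit : Order.IsSuccLimit omega_1 :=
  Cardinal.isSuccLimit_ord (Cardinal.aleph0_le_aleph 1)

theorem succ_lt_omega1 {α : Ordinal} (h : α < omega_1) : α + 1 < omega_1 := by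
  have := omega1_isLimit.succ_lt h
  simpa [Order.succ] using this

theorem nat_sup_lt {f : ℕ → Ordinal.{u}} (h : ∀ n, f n < omega_1) :
    (⨆ n, f n) < omega_1 := by
  apply Ordinal.iSup_lt_ord_lift _ h
  rw [omega_1, Cardinal.isRegular_aleph_one.cof_eq]
  simp only [Cardinal.mk_denumerable, Cardinal.lift_aleph0]
  exact Cardinal.aleph0_lt_aleph_one

theorem bsup_lt {o : Ordinal.{u}} (ho : o < omega_1) {f : ∀ a < o, Ordinal.{u}}
    (h : ∀ i hi, f i hi < omega_1) : Ordinal.bsup.{u,u} o f < omega_1 := by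
  apply Ordinal.bsup_lt_ord _ h
  rw [omega_1, Cardinal.isRegular_aleph_one.cof_eq]
  exact Cardinal.lt_ord.1 ho

theorem countable_bdd {S : Set Ordinal.{u}} (hc : S.Countable)
    (h : ∀ x ∈ S, x < omega_1) : ∃ γ, γ < omega_1 ∧ ∀ x ∈ S, x ≤ γ := by
  rcases S.eq_empty_or_nonempty with rfl | hne
  · exact ⟨0, omega1_isLimit.pos, by simp⟩
  · obtain ⟨fn, rfl⟩ := Set.Countable.exists_eq_range hc hne
    exact ⟨⨆ n, fn n, nat_sup_lt (fun n => h _ ⟨n, rfl⟩),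
      by rintro x ⟨n, rfl⟩; exact Ordinal.le_iSup fn n⟩

variable {T : Type*} [PartialOrder T] (tr : TreeHt T)

theorem ht_mono {x y : T} (h : x ≤ y) : tr.ht x ≤ tr.ht y := by
  rcases eq_or_lt_of_le h with rfl | h
  · exact le_rfl
  · exact (tr.ht_lt h).le

theorem le_of_both_le {x y₁ y₂ : T} (h₁ : y₁ ≤ x) (h₂ : y₂ ≤ x)
    (hht : tr.ht y₁ ≤ tr.ht y₂) : y₁ ≤ y₂ := by
  rcases eq_or_lt_of_le h₂ with rfl | h₂'
  · exact h₁
  rcases eq_or_lt_of_le h₁ with rfl | h₁'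
  · exact absurd (lt_of_le_of_lt hht (tr.ht_lt h₂')) (lt_irrefl _)
  by_cases he : y₁ = y₂
  · exact he.le
  rcases tr.chain_below x h₁' h₂' he with h | h
  · exact h
  · rcases eq_or_lt_of_le h with rfl | h'
    · exact le_rfl
    · exact absurd (lt_of_le_of_lt hht (tr.ht_lt h')) (lt_irrefl _)

theorem eq_of_both_le {x y₁ y₂ : T} (h₁ : y₁ ≤ x) (h₂ : y₂ ≤ x)
    (hht : tr.ht y₁ = tr.ht y₂) : y₁ = y₂ :=
  le_antisymm (le_of_both_le tr h₁ h₂ hht.le) (le_of_both_le tr h₂ h₁ hht.ge)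

theorem exists_pred (x : T) (ξ : Ordinal) (hξ : ξ ≤ tr.ht x) :
    ∃ z, z ≤ x ∧ tr.ht z = ξ := by
  rcases eq_or_lt_of_le hξ with rfl | h
  · exact ⟨x, le_rfl, rfl⟩
  · obtain ⟨z, hz, hz'⟩ := tr.exists_below x ξ h
    exact ⟨z, hz.le, hz'⟩

theorem prune (hR : IsFullSuslin tr) :
    ∀ u β, tr.ht u ≤ β → β < omega_1 → ∃ v, u ≤ v ∧ tr.ht v = β := by
  intro u β hub hβ
  haveI : Subsingleton (Fin 1) := by
    constructor; intro a b; omega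
  obtain ⟨dtr, hht0, hSus⟩ := hR.2 0 (tr.ht u) (hR.1.1.1.1 u) (fun _ => u)
      (fun i j _ => Subsingleton.elim i j) (fun _ => rfl)
  obtain ⟨F, hF⟩ := hSus.1.1.2.1 (β - tr.ht u)
    (lt_of_le_of_lt (Ordinal.sub_le_self β _) hβ)
  have hF : dtr.ht F = β - tr.ht u := hF
  have h0 : u ≤ F.1 0 := F.2.1 0
  have h1 : tr.ht (F.1 0) - tr.ht u = β - tr.ht u := by rw [← hht0 F]; exact hF
  have h2 : tr.ht u ≤ tr.ht (F.1 0) := ht_mono tr h0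
  refine ⟨F.1 0, h0, ?_⟩
  have h3 := Ordinal.add_sub_cancel_of_le h2
  rw [← h3, h1, Ordinal.add_sub_cancel_of_le hub]


theorem vec2_inj {α : Type*} {a b : α} (h : a ≠ b) : Function.Injective (![a, b]) := by
  intro i j hij
  fin_cases i <;> fin_cases j <;> simp_all

theorem vec2_ht {a b : T} (h : tr.ht a = tr.ht b) :
    ∀ i, tr.ht ((![a, b]) i) = tr.ht a := by
  intro i
  fin_cases i <;> simp_all


theorem vec2_mem_derived {a b x y : T} (ha : a ≤ x) (hb : b ≤ y)
    (hxy : tr.ht x = tr.ht y) : (![x, y]) ∈ derivedTreeSet tr ![a, b] := by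
  constructor
  · intro i; fin_cases i <;> simp_all
  · exact ⟨tr.ht x, by intro i; fin_cases i <;> simp_all⟩


def obsup (o : Ordinal.{u}) (f : ∀ a < o, Ordinal.{u}) : Ordinal.{u} :=
  Ordinal.bsup.{u,u} o f

theorem obsup_lt {o : Ordinal.{u}} (ho : o < omega_1) {f : ∀ a < o, Ordinal.{u}}
    (h : ∀ i hi, f i hi < omega_1) : obsup o f < omega_1 :=
  bsup_lt ho h

theorem le_obsup {o : Ordinal.{u}} (f : ∀ a < o, Ordinal.{u}) (i : Ordinal.{u})
    (h : i < o) : f i h ≤ obsup o f :=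
  Ordinal.le_bsup f i h

end SAux


/-- If `R` is full Suslin, `D ⊆ ω₁` is a club and `s ≠ t` are elements of `R` of the same
height, then there is no order-preserving injection from `R_s↾D` to `R_t↾D`. -/
theorem statement2 (R : Type*) [PartialOrder R] (trR : TreeHt R) (hR : IsFullSuslin trR)
    (D : Set Ordinal) (hD : IsClubSet D) (s t : R) (hne : s ≠ t)
    (hht : trR.ht s = trR.ht t) :
    ¬ ∃ f : R → R,
      (∀ u, s ≤ u → trR.ht u ∈ D → t ≤ f u ∧ trR.ht (f u) ∈ D) ∧
      (∀ u v, s ≤ u → s ≤ v → trR.ht u ∈ D → trR.ht v ∈ D → u < v → f u < f v) ∧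
      (∀ u v, s ≤ u → s ≤ v → trR.ht u ∈ D → trR.ht v ∈ D → f u = f v → u = v) := by
  rintro ⟨f, h1, h2, h3⟩
  have hhtlt : ∀ u : R, trR.ht u < omega_1 := hR.1.1.1.1
  set δ := trR.ht s with hδdef
  have hδlt : δ < omega_1 := hhtlt s
  have prune := SAux.prune trR hR
  -- pick an element of D above any countable ordinal
  have Dpick : ∀ γ, γ < omega_1 → ∃ β, β ∈ D ∧ γ < β ∧ β < omega_1 := by
    intro γ hγ
    obtain ⟨β, hβD, hβ⟩ := hD.2.1 (γ + 1) (SAux.succ_lt_omega1 hγ)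
    have hγβ : γ < β := lt_of_lt_of_le (by
      rw [Ordinal.add_one_eq_succ]; exact Order.lt_succ γ) hβ
    exact ⟨β, hβD, hγβ, hD.1 β hβD⟩
  -- heights of f-images eventually exceed any fixed β
  have Phi : ∀ β, β < omega_1 → ∃ β', β' ∈ D ∧ δ < β' ∧ β' < omega_1 ∧
      ∀ β'', β'' ∈ D → β' ≤ β'' → ∀ u, s ≤ u → trR.ht u = β'' →
        β < trR.ht (f u) := by
    intro β
    induction β using Ordinal.induction with
    | _ β IH =>
    intro hβ
    have hwit : ∀ k (hk : k < β), k < omega_1 := fun k hk => hk.trans hβ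
    set σ := Ordinal.bsup β (fun k hk => (IH k hk (hwit k hk)).choose) with hσdef
    have hσlt : σ < omega_1 :=
      SAux.bsup_lt hβ (fun k hk => (IH k hk (hwit k hk)).choose_spec.2.2.1)
    obtain ⟨β₀, hβ₀D, hβ₀gt, hβ₀lt⟩ := Dpick (max σ δ) (max_lt hσlt hδlt)
    have hσβ₀ : σ < β₀ := (le_max_left σ δ).trans_lt hβ₀gt
    have hδβ₀ : δ < β₀ := (le_max_right σ δ).trans_lt hβ₀gt
    have C1 : ∀ β'', β'' ∈ D → β₀ ≤ β'' → ∀ u, s ≤ u → trR.ht u = β'' →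
        β ≤ trR.ht (f u) := by
      intro β'' hβ''D hle u hsu hu
      by_contra hc
      push_neg at hc
      have hk : trR.ht (f u) < β := hc
      have spec := (IH _ hk (hwit _ hk)).choose_spec
      have hle2 : (IH _ hk (hwit _ hk)).choose ≤ β'' :=
        le_trans (le_trans (Ordinal.le_bsup _ _ hk) hσβ₀.le) hle
      exact absurd (spec.2.2.2 β'' hβ''D hle2 u hsu hu) (lt_irrefl _)
    obtain ⟨β', hβ'D, hβ'gt, hβ'lt⟩ := Dpick β₀ hβ₀lt
    refine ⟨β', hβ'D, hδβ₀.trans hβ'gt, hβ'lt, ?_⟩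
    intro β'' hβ''D hle u hsu hu
    have hβ₀β'' : β₀ ≤ β'' := (hβ'gt.le).trans hle
    obtain ⟨v, hvle, hvht⟩ := SAux.exists_pred trR u β₀ (by rw [hu]; exact hβ₀β'')
    have hsv : s ≤ v := SAux.le_of_both_le trR hsu hvle
      (by rw [hvht, ← hδdef]; exact hδβ₀.le)
    have hvu : v < u := lt_of_le_of_ne hvle (by
      intro e
      rw [e, hu] at hvht
      have hx : β₀ < β'' := hβ'gt.trans_le hle
      rw [hvht] at hx
      exact lt_irrefl _ hx)
    have hfv : f v < f u := h2 v u hsv hsu (hvht ▸ hβ₀D) (hu ▸ hβ''D) hvu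
    exact lt_of_le_of_lt (C1 β₀ hβ₀D le_rfl v hsv hvht) (trR.ht_lt hfv)
  -- there are unboundedly many "good" levels
  have hUnb : ∀ γ, γ < omega_1 → ∃ α, γ < α ∧ α ∈ D ∧ δ < α ∧ α < omega_1 ∧
      ∀ u, s ≤ u → trR.ht u = α → α ≤ trR.ht (f u) := by
    have step : ∀ x, x < omega_1 → ∃ y, y ∈ D ∧ x < y ∧ δ < y ∧ y < omega_1 ∧
        ∀ u, s ≤ u → trR.ht u = y → x < trR.ht (f u) := by
      intro x hx
      obtain ⟨β', hβ'D, hδβ', hβ'lt, hP⟩ := Phi x hx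
      obtain ⟨y, hyD, hygt, hylt⟩ := Dpick (max β' x) (max_lt hβ'lt hx)
      have hy1 : β' < y := (le_max_left _ _).trans_lt hygt
      have hy2 : x < y := (le_max_right _ _).trans_lt hygt
      exact ⟨y, hyD, hy2, hδβ'.trans hy1, hylt,
        fun u hsu hu => hP y hyD hy1.le u hsu hu⟩
    intro γ hγ
    obtain ⟨x0, hx0D, hx0gt, hx0lt⟩ := Dpick (max γ δ) (max_lt hγ hδlt)
    let T0 := {x : Ordinal // x ∈ D ∧ δ < x ∧ x < omega_1}
    let stepf : T0 → T0 := fun p =>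
      ⟨(step p.1 p.2.2.2).choose, (step p.1 p.2.2.2).choose_spec.1,
        (step p.1 p.2.2.2).choose_spec.2.2.1,
        (step p.1 p.2.2.2).choose_spec.2.2.2.1⟩
    let A : ℕ → T0 := fun n =>
      stepf^[n] ⟨x0, hx0D, (le_max_right γ δ).trans_lt hx0gt, hx0lt⟩
    have hA0 : (A 0).1 = x0 := rfl
    have hAsucc : ∀ n, A (n + 1) = stepf (A n) := fun n =>
      Function.iterate_succ_apply' stepf n _
    have hlink : ∀ n, (A n).1 < (A (n + 1)).1 ∧
        ∀ u, s ≤ u → trR.ht u = (A (n + 1)).1 → (A n).1 < trR.ht (f u) := by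
      intro n
      have hs := (step (A n).1 (A n).2.2.2).choose_spec
      rw [hAsucc n]
      exact ⟨hs.2.1, hs.2.2.2.2⟩
    have hmono : ∀ n m, n < m → (A n).1 < (A m).1 := by
      have hsm : StrictMono (fun n => (A n).1) :=
        strictMono_nat_of_lt_succ (fun n => (hlink n).1)
      exact fun n m h => hsm h
    set αω := ⨆ n, (A n).1 with hαωdef
    have hαωlt : αω < omega_1 := SAux.nat_sup_lt (fun n => (A n).2.2.2)
    have hlesup : ∀ n, (A n).1 ≤ αω := fun n => Ordinal.le_iSup (fun n => (A n).1) n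
    have hltsup : ∀ n, (A n).1 < αω := fun n =>
      lt_of_lt_of_le (hmono n (n + 1) (Nat.lt_succ_self n)) (hlesup (n + 1))
    have hαωD : αω ∈ D := by
      apply hD.2.2 αω hαωlt
      · have : (0 : Ordinal) < αω :=
          lt_of_le_of_lt (show (0 : Ordinal) ≤ x0 from zero_le) (hA0 ▸ hltsup 0)
        exact this.ne'
      · intro β hβ
        obtain ⟨n, hn⟩ := Ordinal.lt_iSup_iff.1 hβ
        exact ⟨(A n).1, (A n).2.1, hn, hltsup n⟩
    have hδαω : δ < αω := lt_of_lt_of_le (A 0).2.2.1 (hlesup 0)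
    have hγαω : γ < αω := by
      have : γ < x0 := (le_max_left γ δ).trans_lt hx0gt
      exact lt_of_lt_of_le this (hA0 ▸ hlesup 0)
    refine ⟨αω, hγαω, hαωD, hδαω, hαωlt, ?_⟩
    intro u hsu hu
    rw [hαωdef]
    apply Ordinal.iSup_le
    intro n
    obtain ⟨v, hvle, hvht⟩ := SAux.exists_pred trR u (A (n + 1)).1
      (by rw [hu]; exact hlesup (n + 1))
    have hsv : s ≤ v := SAux.le_of_both_le trR hsu hvle
      (by rw [hvht]; exact ((A (n + 1)).2.2.1).le)
    have hvu : v < u := lt_of_le_of_ne hvle (by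
      intro e
      rw [e, hu] at hvht
      have hx := hltsup (n + 1)
      rw [← hvht] at hx
      exact lt_irrefl _ hx)
    have h5 := (hlink n).2 v hsv hvht
    have hfv : f v < f u := h2 v u hsv hsu
      (by rw [hvht]; exact (A (n + 1)).2.1) (by rw [hu]; exact hαωD) hvu
    exact (h5.trans (trR.ht_lt hfv)).le
  -- the level-preserving projection g of f
  classical
  set g : R → R := fun u =>
    if h : ∃ z, z ≤ f u ∧ trR.ht z = trR.ht u then h.choose else u with hgdef
  have hg : ∀ u, s ≤ u → trR.ht u ≤ trR.ht (f u) →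
      g u ≤ f u ∧ trR.ht (g u) = trR.ht u := by
    intro u _ hle
    have hex : ∃ z, z ≤ f u ∧ trR.ht z = trR.ht u :=
      SAux.exists_pred trR (f u) _ hle
    rw [hgdef]
    simp only [dif_pos hex]
    exact hex.choose_spec
  have hgt : ∀ u, s ≤ u → trR.ht u ∈ D → δ ≤ trR.ht u →
      trR.ht u ≤ trR.ht (f u) → t ≤ g u := by
    intro u hsu huD hδu hle
    have h₁ := (h1 u hsu huD).1
    have h₂ := hg u hsu hle
    exact SAux.le_of_both_le trR h₁ h₂.1 (by rw [h₂.2, ← hht]; exact hδu)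
  have hgcoh : ∀ u v, s ≤ u → s ≤ v → trR.ht u ∈ D → trR.ht v ∈ D →
      trR.ht u ≤ trR.ht (f u) → trR.ht v ≤ trR.ht (f v) → u ≤ v →
      g u ≤ g v := by
    intro u v hsu hsv huD hvD hu hv huv
    rcases eq_or_lt_of_le huv with rfl | hlt
    · exact le_rfl
    have hfu : f u < f v := h2 u v hsu hsv huD hvD hlt
    have hgu := hg u hsu hu
    have hgv := hg v hsv hv
    exact SAux.le_of_both_le trR (hgu.1.trans hfu.le) hgv.1
      (by rw [hgu.2, hgv.2]; exact SAux.ht_mono trR huv)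
  -- the derived tree over (s, t)
  have hinj : Function.Injective (![s, t]) := SAux.vec2_inj hne
  have hhts : ∀ i, trR.ht ((![s, t]) i) = δ := SAux.vec2_ht trR hht
  obtain ⟨dtr, hdtrht, hdSus⟩ := hR.2 1 δ hδlt ![s, t] hinj hhts
  let GOOD : Ordinal → Prop := fun α => α ∈ D ∧ δ < α ∧ α < omega_1 ∧
      ∀ u, s ≤ u → trR.ht u = α → α ≤ trR.ht (f u)
  have hUnb' : ∀ γ, γ < omega_1 → ∃ α, γ < α ∧ GOOD α := fun γ hγ => hUnb γ hγ
  by_cases hcase : ∃ z, s ≤ z ∧ GOOD (trR.ht z) ∧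
      ∀ u₁ u₂, z ≤ u₁ → z ≤ u₂ → GOOD (trR.ht u₁) → GOOD (trR.ht u₂) →
        trR.ht u₁ = trR.ht u₂ → g u₁ = g u₂
  · -- Case 1: g is eventually constant on levels above z; get an uncountable chain
    obtain ⟨z, hsz, hGz, hconst⟩ := hcase
    have hcomp : ∀ u₁ u₂, z ≤ u₁ → z ≤ u₂ → GOOD (trR.ht u₁) → GOOD (trR.ht u₂) →
        trR.ht u₁ ≤ trR.ht u₂ → g u₁ ≤ g u₂ := by
      intro u₁ u₂ hz1 hz2 hG1 hG2 hle
      obtain ⟨u₁', h1le, h1ht⟩ := prune u₁ (trR.ht u₂) hle hG2.2.2.1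
      have hz1' : z ≤ u₁' := hz1.trans h1le
      have hG1' : GOOD (trR.ht u₁') := by rw [h1ht]; exact hG2
      have e1 : g u₁' = g u₂ := hconst u₁' u₂ hz1' hz2 hG1' hG2 (by rw [h1ht])
      have hcoh : g u₁ ≤ g u₁' := hgcoh u₁ u₁' (hsz.trans hz1) (hsz.trans hz1')
        hG1.1 hG1'.1 (hG1.2.2.2 u₁ (hsz.trans hz1) rfl)
        (hG1'.2.2.2 u₁' (hsz.trans hz1') rfl) h1le
      rw [← e1]; exact hcoh
    let c : Set R := {w | ∃ u, z ≤ u ∧ GOOD (trR.ht u) ∧ w = g u}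
    have hchain : IsChain (· ≤ ·) c := by
      rintro w₁ ⟨u₁, hz1, hG1, rfl⟩ w₂ ⟨u₂, hz2, hG2, rfl⟩ _
      rcases le_total (trR.ht u₁) (trR.ht u₂) with h | h
      · exact Or.inl (hcomp u₁ u₂ hz1 hz2 hG1 hG2 h)
      · exact Or.inr (hcomp u₂ u₁ hz2 hz1 hG2 hG1 h)
    have hccount : c.Countable := hR.1.1.2 c hchain
    have hEcount : (trR.ht '' c).Countable := hccount.image _
    obtain ⟨γ₀, hγ₀lt, hγ₀bd⟩ := SAux.countable_bdd hEcount
      (by rintro x ⟨w, _, rfl⟩; exact hhtlt w)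
    obtain ⟨α, hα1, hGα⟩ := hUnb' (max γ₀ (trR.ht z)) (max_lt hγ₀lt (hhtlt z))
    obtain ⟨uα, hzu, hu⟩ := prune z α ((le_max_right _ _).trans hα1.le) hGα.2.2.1
    have hGu : GOOD (trR.ht uα) := by rw [hu]; exact hGα
    have hmem : α ∈ trR.ht '' c := by
      refine ⟨g uα, ⟨uα, hzu, hGu, rfl⟩, ?_⟩
      rw [(hg uα (hsz.trans hzu) (hGu.2.2.2 uα (hsz.trans hzu) rfl)).2, hu]
    exact absurd ((le_max_left γ₀ (trR.ht z)).trans_lt hα1)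
      (not_lt.mpr (hγ₀bd α hmem))
  · -- Case 2: g splits everywhere; build an uncountable antichain in the derived tree
    have hsplit : ∀ z, s ≤ z → GOOD (trR.ht z) → ∃ u₁ u₂, z ≤ u₁ ∧ z ≤ u₂ ∧
        GOOD (trR.ht u₁) ∧ GOOD (trR.ht u₂) ∧ trR.ht u₁ = trR.ht u₂ ∧
        g u₁ ≠ g u₂ := by
      intro z hsz hGz
      by_contra hc
      push_neg at hc
      exact hcase ⟨z, hsz, hGz, fun u₁ u₂ h1' h2' hg1 hg2 hh =>
        hc u₁ u₂ h1' h2' hg1 hg2 hh⟩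
    let Pack : (↥(derivedTreeSet trR ![s, t])) → Ordinal → Prop := fun x γ =>
      ∃ β u₁ u₂ z, s ≤ u₁ ∧ s ≤ u₂ ∧ GOOD β ∧
        trR.ht u₁ = β ∧ trR.ht u₂ = β ∧ x.1 0 = u₁ ∧ x.1 1 = g u₂ ∧
        g u₁ ≠ g u₂ ∧ z ≤ u₁ ∧ z ≤ u₂ ∧ γ < trR.ht z
    have EX : ∀ γ, γ < omega_1 → ∃ x, Pack x γ := by
      intro γ hγ
      obtain ⟨α, hγα, hGα⟩ := hUnb' γ hγ
      obtain ⟨z, hsz, hzht⟩ := prune s α hGα.2.1.le hGα.2.2.1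
      have hGz : GOOD (trR.ht z) := by rw [hzht]; exact hGα
      obtain ⟨u₁, u₂, hz1, hz2, hG1, hG2, hht12, hgne⟩ := hsplit z hsz hGz
      have hs1 : s ≤ u₁ := hsz.trans hz1
      have hs2 : s ≤ u₂ := hsz.trans hz2
      have hf2 : trR.ht u₂ ≤ trR.ht (f u₂) := hG2.2.2.2 u₂ hs2 rfl
      have hgu₂ := hg u₂ hs2 hf2
      have htg : trR.ht u₁ = trR.ht (g u₂) := by rw [hgu₂.2, hht12]
      have htgu : t ≤ g u₂ := hgt u₂ hs2 hG2.1 hG2.2.1.le hf2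
      have hmem : (![u₁, g u₂]) ∈ derivedTreeSet trR ![s, t] :=
        SAux.vec2_mem_derived trR hs1 htgu htg
      exact ⟨⟨![u₁, g u₂], hmem⟩, trR.ht u₁, u₁, u₂, z, hs1, hs2, hG1, rfl,
        hht12.symm, rfl, rfl, hgne, hz1, hz2, by rw [hzht]; exact hγα⟩
    have INC : ∀ x γ x' γ', Pack x γ → Pack x' γ' → trR.ht (x.1 0) ≤ γ' →
        x ≠ x' ∧ ¬ x ≤ x' ∧ ¬ x' ≤ x := by
      rintro x γ x' γ'
        ⟨β, u₁, u₂, z, hs1, hs2, hGβ, h1β, h2β, hx0, hx1, hgne, -, -, -⟩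
        ⟨β', u₁', u₂', z', hs1', hs2', hGβ', h1β', h2β', hx0', hx1', hgne',
          hz1', hz2', hγz'⟩ hxγ'
      have hβz' : β < trR.ht z' := by
        rw [hx0, h1β] at hxγ'
        exact lt_of_le_of_lt hxγ' hγz'
      have hββ' : β < β' := by
        rw [← h1β']
        exact hβz'.trans_le (SAux.ht_mono trR hz1')
      have hf1 : trR.ht u₁ ≤ trR.ht (f u₁) := by
        rw [h1β]; exact hGβ.2.2.2 u₁ hs1 h1β
      have hf2 : trR.ht u₂ ≤ trR.ht (f u₂) := by
        rw [h2β]; exact hGβ.2.2.2 u₂ hs2 h2β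
      have hf2' : trR.ht u₂' ≤ trR.ht (f u₂') := by
        rw [h2β']; exact hGβ'.2.2.2 u₂' hs2' h2β'
      refine ⟨?_, ?_, ?_⟩
      · intro e
        rw [e, hx0'] at hx0
        rw [← hx0, h1β'] at h1β
        exact absurd h1β hββ'.ne'
      · intro hle
        have hle' : x.1 ≤ x'.1 := Subtype.coe_le_coe.mpr hle
        have h0 : u₁ ≤ u₁' := by rw [← hx0, ← hx0']; exact hle' 0
        have h1 : g u₂ ≤ g u₂' := by rw [← hx1, ← hx1']; exact hle' 1
        have hu₁z' : u₁ ≤ z' := SAux.le_of_both_le trR h0 hz1'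
          (by rw [h1β]; exact hβz'.le)
        have hu₁u₂' : u₁ ≤ u₂' := hu₁z'.trans hz2'
        have hga : g u₁ ≤ g u₂' := hgcoh u₁ u₂' hs1 hs2'
          (by rw [h1β]; exact hGβ.1) (by rw [h2β']; exact hGβ'.1)
          hf1 hf2' hu₁u₂'
        have e : g u₁ = g u₂ := SAux.eq_of_both_le trR hga h1
          (by rw [(hg u₁ hs1 hf1).2, (hg u₂ hs2 hf2).2, h1β, h2β])
        exact hgne e
      · intro hle
        have hle' : x'.1 ≤ x.1 := Subtype.coe_le_coe.mpr hle
        have h0 : u₁' ≤ u₁ := by rw [← hx0, ← hx0']; exact hle' 0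
        have hba : β' ≤ β := by rw [← h1β, ← h1β']; exact SAux.ht_mono trR h0
        exact absurd hββ' (not_lt.mpr hba)
    -- transfinite recursion producing an uncountable antichain
    let x₀base := (EX 0 SAux.omega1_isLimit.pos).choose
    let F : Ordinal → ↥(derivedTreeSet trR ![s, t]) :=
      (wellFounded_lt : WellFounded ((· < ·) : Ordinal → Ordinal → Prop)).fix (fun i rec =>
        if h : SAux.obsup i (fun j hj => trR.ht ((rec j hj).1 0)) < omega_1 then
          (EX _ h).choose
        else x₀base)
    have Feq : ∀ i, F i =
        (if h : SAux.obsup i (fun j _ => trR.ht ((F j).1 0)) < omega_1 then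
          (EX _ h).choose
        else x₀base) := fun i => (wellFounded_lt : WellFounded ((· < ·) : Ordinal → Ordinal → Prop)).fix_eq _ i
    have hPack : ∀ i, i < omega_1 →
        Pack (F i) (SAux.obsup i (fun j _ => trR.ht ((F j).1 0))) := by
      intro i hi
      have hb : SAux.obsup i (fun j _ => trR.ht ((F j).1 0)) < omega_1 :=
        SAux.obsup_lt hi (fun j hj => hhtlt _)
      rw [Feq i, dif_pos hb]
      exact (EX _ hb).choose_spec
    have key : ∀ i j, i < omega_1 → j < omega_1 → i < j →
        F i ≠ F j ∧ ¬ F i ≤ F j ∧ ¬ F j ≤ F i := by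
      intro i j hi hj hij
      have hle : trR.ht ((F i).1 0) ≤
          SAux.obsup j (fun k _ => trR.ht ((F k).1 0)) :=
        SAux.le_obsup _ i hij
      exact INC (F i) _ (F j) _ (hPack i hi) (hPack j hj) hle
    let A : Set (↥(derivedTreeSet trR ![s, t])) := F '' (Set.Iio omega_1)
    have hAanti : ∀ x ∈ A, ∀ y ∈ A, x ≠ y → ¬ x ≤ y ∧ ¬ y ≤ x := by
      rintro x ⟨i, hi, rfl⟩ y ⟨j, hj, rfl⟩ hxy
      rcases lt_trichotomy i j with h | h | h
      · exact ⟨(key i j hi hj h).2.1, (key i j hi hj h).2.2⟩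
      · exact absurd (congrArg F h) hxy
      · exact ⟨(key j i hj hi h).2.2, (key j i hj hi h).2.1⟩
    have hAcount : A.Countable := hdSus.2 A hAanti
    have hinjF : Set.InjOn F (Set.Iio omega_1) := by
      intro i hi j hj e
      rcases lt_trichotomy i j with h | h | h
      · exact absurd e (key i j hi hj h).1
      · exact h
      · exact absurd e.symm (key j i hj hi h).1
    have hIio : (Set.Iio omega_1 : Set Ordinal).Countable :=
      Set.countable_of_injective_of_countable_image hinjF hAcount
    obtain ⟨γ₀, hγ₀, hbd⟩ := SAux.countable_bdd hIio (fun x hx => hx)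
    have hlt1 : γ₀ + 1 < omega_1 := SAux.succ_lt_omega1 hγ₀
    have hle1 : γ₀ + 1 ≤ γ₀ := hbd _ hlt1
    have hgt1 : γ₀ < γ₀ + 1 := by
      rw [Ordinal.add_one_eq_succ]; exact Order.lt_succ γ₀
    exact absurd (hgt1.trans_le hle1) (lt_irrefl _)
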